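/- arXiv:2012.13902 — 2 statements merged into one kernel-verified Lean document; each statement's English description precedes it below -/
import Mathlib

section
/- Let n ≥ 1 and V ∈ ℝⁿ. Define W : ℝ^{n+1} → ℝ^{n+1} by W(y) := y_0·((0,V) − ⟨y',V⟩·y) for y = (y_0, y'). Then: (1) ⟨W(y), y⟩ = 0 for every y ∈ S^n (W is tangent to the sphere); (2) W(y) = 0 whenever y_0 = 0; (3) for every x ∈ ℝⁿ, the derivative at t = 0 of the curve t ↦ Θ_n(x + tV) equals W(Θ_n(x)); (4) for every y ∈ S^n with y_0 ≥ 0, the derivative at t = 0 of the curve t ↦ f_{I,tV}(y) equals W(y), where f_{I,tV}(y) := (y_0, y' + t y_0 V)/‖(y_0, y' + t y_0 V)‖. In other words, the constant vector field V on ℝⁿ extends, via Θ_n, to a smooth vector field on the closed half-sphere S^n_1 (the spherical compactification) that vanishes on the boundary sphere at infinity, and this extension is the infinitesimal generator of the extended translation action. -/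
noncomputable section

/-- The euclidean norm on `ℝ^{n+1} = ℝ × ℝⁿ`. -/
def eNorm {n : ℕ} (y : ℝ × EuclideanSpace ℝ (Fin n)) : ℝ :=
  Real.sqrt (y.1 ^ 2 + ‖y.2‖ ^ 2)

/-- The map `Θ_n(x) = (1+‖x‖²)^{-1/2}(1, x)` into the sphere `S^n ⊂ ℝ × ℝⁿ`. -/
def thetaMap {n : ℕ} (x : EuclideanSpace ℝ (Fin n)) : ℝ × EuclideanSpace ℝ (Fin n) :=
  (Real.sqrt (1 + ‖x‖ ^ 2))⁻¹ • ((1 : ℝ), x)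

/-- The vector field `W(y) = y₀·((0,V) − ⟨y',V⟩·y)` on `ℝ^{n+1} = ℝ × ℝⁿ`. -/
def Wfield {n : ℕ} (V : EuclideanSpace ℝ (Fin n)) (y : ℝ × EuclideanSpace ℝ (Fin n)) :
    ℝ × EuclideanSpace ℝ (Fin n) :=
  y.1 • (((0 : ℝ), V) - (inner ℝ y.2 V : ℝ) • y)

lemma enorm_sq {n : ℕ} (y : ℝ × EuclideanSpace ℝ (Fin n)) (h : eNorm y = 1) :
    y.1 ^ 2 + ‖y.2‖ ^ 2 = 1 := by
  have h0 : 0 ≤ y.1 ^ 2 + ‖y.2‖ ^ 2 := by positivity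
  have := congrArg (· ^ 2) h
  simpa [eNorm, Real.sq_sqrt h0] using this

lemma key {n : ℕ} (V : EuclideanSpace ℝ (Fin n)) (y : ℝ × EuclideanSpace ℝ (Fin n))
    (h : y.1 ^ 2 + ‖y.2‖ ^ 2 = 1) :
    HasDerivAt
      (fun t : ℝ => (eNorm (y.1, y.2 + (t * y.1) • V))⁻¹ •
        ((y.1, y.2 + (t * y.1) • V) : ℝ × EuclideanSpace ℝ (Fin n)))
      (Wfield V y) 0 := by
  set a : ℝ := inner ℝ y.2 V with ha
  -- the curve
  have hu : HasDerivAt (fun t : ℝ => y.2 + (t * y.1) • V) (y.1 • V) 0 := by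
    have heq : (fun t : ℝ => y.2 + (t * y.1) • V) = fun t : ℝ => y.2 + t • (y.1 • V) := by
      funext t; rw [mul_smul]
    rw [heq]
    simpa using ((hasDerivAt_id (0:ℝ)).smul_const (y.1 • V)).const_add y.2
  have hc : HasDerivAt (fun t : ℝ => ((y.1, y.2 + (t * y.1) • V) : ℝ × EuclideanSpace ℝ (Fin n)))
      (((0 : ℝ), y.1 • V)) 0 := (hasDerivAt_const (0:ℝ) y.1).prodMk hu
  -- the squared norm
  have hN : HasDerivAt (fun t : ℝ => y.1 ^ 2 + (inner ℝ (y.2 + (t * y.1) • V) (y.2 + (t * y.1) • V) : ℝ))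
      (2 * (y.1 * a)) 0 := by
    have := (hasDerivAt_const (0:ℝ) (y.1 ^ 2)).add (hu.inner ℝ hu)
    simp only [zero_mul, zero_smul, add_zero, zero_add] at this
    refine this.congr_deriv ?_
    rw [real_inner_smul_right, real_inner_smul_left, real_inner_comm y.2 V, ha]
    ring
  have hN0 : y.1 ^ 2 + (inner ℝ (y.2 + ((0:ℝ) * y.1) • V) (y.2 + ((0:ℝ) * y.1) • V) : ℝ) = 1 := by
    simp only [zero_mul, zero_smul, add_zero]
    rw [real_inner_self_eq_norm_sq, h]
  have hs : HasDerivAt (fun t : ℝ => (eNorm (y.1, y.2 + (t * y.1) • V))⁻¹) (-(y.1 * a)) 0 := by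
    have hsqrt := (hN.sqrt (by simp only [hN0]; norm_num)).inv (by simp only [hN0]; simp)
    have heq : (fun t : ℝ => (Real.sqrt (y.1 ^ 2 + (inner ℝ (y.2 + (t * y.1) • V) (y.2 + (t * y.1) • V) : ℝ)))⁻¹)
        = fun t : ℝ => (eNorm (y.1, y.2 + (t * y.1) • V))⁻¹ := by
      funext t
      rw [eNorm, real_inner_self_eq_norm_sq]
    rw [← heq]
    refine hsqrt.congr_deriv ?_
    simp only [hN0]
    simp
  have hfinal := hs.smul hc
  have h00 : ((y.1, y.2 + ((0:ℝ) * y.1) • V) : ℝ × EuclideanSpace ℝ (Fin n)) = y := by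
    simp
  rw [h00] at hfinal
  have hval : (eNorm y)⁻¹ = 1 := by simp [eNorm, h]
  rw [hval] at hfinal
  refine hfinal.congr_deriv ?_
  rw [one_smul, Wfield, smul_sub, smul_smul, ← ha]
  have h2 : y.1 • (((0:ℝ), V) : ℝ × EuclideanSpace ℝ (Fin n)) = ((0:ℝ), y.1 • V) := by
    simp [Prod.smul_mk]
  rw [h2, sub_eq_add_neg, neg_smul]

example : True := trivial

lemma eNorm_smul {n : ℕ} (c : ℝ) (hc : 0 ≤ c) (z : ℝ × EuclideanSpace ℝ (Fin n)) :
    eNorm (c • z) = c * eNorm z := by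
  have : (c • z).1 = c * z.1 := rfl
  have h2 : (c • z).2 = c • z.2 := rfl
  rw [eNorm, eNorm, this, h2, norm_smul]
  have : (c * z.1) ^ 2 + (‖c‖ * ‖z.2‖) ^ 2 = c ^ 2 * (z.1 ^ 2 + ‖z.2‖ ^ 2) := by
    rw [Real.norm_eq_abs, mul_pow, mul_pow, sq_abs]; ring
  rw [this, Real.sqrt_mul (sq_nonneg c), Real.sqrt_sq hc]

lemma thetaMap_eq {n : ℕ} (z : EuclideanSpace ℝ (Fin n)) :
    thetaMap z = (eNorm ((1:ℝ), z))⁻¹ • (((1:ℝ), z) : ℝ × EuclideanSpace ℝ (Fin n)) := by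
  rw [thetaMap, eNorm]; norm_num

/-- The constant vector field `V` on `ℝⁿ` extends via `Θ_n` to the
vector field `W` on the spherical compactification: `W` is tangent to `S^n`, vanishes
on the sphere at infinity `{y₀ = 0}`, is `Θ_n`-related to the constant field `V`, and is
the infinitesimal generator of the extended translation action. -/
theorem statement6 (n : ℕ) (hn : 1 ≤ n) (V : EuclideanSpace ℝ (Fin n)) :
    (∀ y : ℝ × EuclideanSpace ℝ (Fin n), eNorm y = 1 →
      (Wfield V y).1 * y.1 + (inner ℝ (Wfield V y).2 y.2 : ℝ) = 0) ∧
    (∀ y : ℝ × EuclideanSpace ℝ (Fin n), y.1 = 0 → Wfield V y = 0) ∧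
    (∀ x : EuclideanSpace ℝ (Fin n),
      HasDerivAt (fun t : ℝ => thetaMap (x + t • V)) (Wfield V (thetaMap x)) 0) ∧
    (∀ y : ℝ × EuclideanSpace ℝ (Fin n), eNorm y = 1 → 0 ≤ y.1 →
      HasDerivAt
        (fun t : ℝ => (eNorm (y.1, y.2 + (t * y.1) • V))⁻¹ •
          ((y.1, y.2 + (t * y.1) • V) : ℝ × EuclideanSpace ℝ (Fin n)))
        (Wfield V y) 0) := by
  refine ⟨?_, ?_, ?_, ?_⟩
  · intro y hy
    have h1 := enorm_sq y hy
    have hW1 : (Wfield V y).1 = y.1 * (0 - (inner ℝ y.2 V : ℝ) * y.1) := rfl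
    have hW2 : (Wfield V y).2 = y.1 • (V - (inner ℝ y.2 V : ℝ) • y.2) := rfl
    rw [hW1, hW2, real_inner_smul_left, inner_sub_left, real_inner_smul_left,
      real_inner_comm V y.2, real_inner_self_eq_norm_sq]
    linear_combination (-(y.1 * (inner ℝ V y.2 : ℝ))) * h1
  · intro y hy
    simp [Wfield, hy]
  · intro x
    have hpos : (0:ℝ) < 1 + ‖x‖ ^ 2 := by positivity
    have hr : 0 < Real.sqrt (1 + ‖x‖ ^ 2) := Real.sqrt_pos.mpr hpos
    set r : ℝ := Real.sqrt (1 + ‖x‖ ^ 2) with hrdef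
    have hr2 : r ^ 2 = 1 + ‖x‖ ^ 2 := Real.sq_sqrt hpos.le
    have hy1 : (thetaMap x).1 = r⁻¹ := by simp [thetaMap, hrdef]
    have hy2 : (thetaMap x).2 = r⁻¹ • x := rfl
    have h : (thetaMap x).1 ^ 2 + ‖(thetaMap x).2‖ ^ 2 = 1 := by
      rw [hy1, hy2, norm_smul, Real.norm_eq_abs, abs_of_pos (inv_pos.mpr hr), mul_pow]
      field_simp
      linarith [hr2]
    have hk := key V (thetaMap x) h
    have heq : (fun t : ℝ => (eNorm ((thetaMap x).1, (thetaMap x).2 + (t * (thetaMap x).1) • V))⁻¹ •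
          (((thetaMap x).1, (thetaMap x).2 + (t * (thetaMap x).1) • V) : ℝ × EuclideanSpace ℝ (Fin n)))
        = fun t : ℝ => thetaMap (x + t • V) := by
      funext t
      have hvec : (((thetaMap x).1, (thetaMap x).2 + (t * (thetaMap x).1) • V) : ℝ × EuclideanSpace ℝ (Fin n))
          = r⁻¹ • (((1:ℝ), x + t • V) : ℝ × EuclideanSpace ℝ (Fin n)) := by
        rw [hy1, hy2, Prod.smul_mk, smul_eq_mul, mul_one, smul_add, smul_smul, mul_comm t r⁻¹]
      rw [hvec, eNorm_smul r⁻¹ (inv_pos.mpr hr).le, thetaMap_eq, mul_inv, smul_smul]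
      congr 1
      rw [inv_inv]
      rw [mul_right_comm, mul_inv_cancel₀ hr.ne', one_mul]
    rw [heq] at hk
    exact hk
  · intro y hy _
    exact key V y (enorm_sq y hy)
end
end

section
/- Let m ≥ 1, m' ≥ 0, 0 ≤ k ≤ m and 0 ≤ k' ≤ m'+1. Set ℝ^m_k := [0,∞)^k × ℝ^{m−k}, let S^{m+m'} be the unit sphere of ℝ^{m+m'+1} = ℝ^m × ℝ^{m'+1}, with points written (η,μ), η ∈ ℝ^m, μ ∈ ℝ^{m'+1}, and set S^{m,m'}_{k,k'} := S^{m+m'} ∩ (ℝ^m_k × ℝ^{m'+1}_{k'}). Define Ψ(η,μ) := ( η/‖η‖ , (‖η‖, μ) ). Then Ψ is a bijection from {(η,μ) ∈ S^{m,m'}_{k,k'} : η ≠ 0} onto S^{m−1}_k × {(r,μ) ∈ S^{m'+1}_{k'+1} : r > 0}, where S^{m−1}_k := S^{m−1} ∩ ℝ^m_k and S^{m'+1}_{k'+1} := S^{m'+1} ∩ ([0,∞) × ℝ^{m'+1}_{k'}) ⊂ ℝ × ℝ^{m'+1}; the inverse of Ψ is (a, (r,μ)) ↦ (r·a, μ),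 and both Ψ and its inverse are restrictions of smooth maps defined on open subsets of the ambient euclidean spaces. -/
noncomputable section

/-- The model orthant `ℝ^m_k = [0,∞)^k × ℝ^{m−k}` inside `ℝ^m`. -/
def orthant (m k : ℕ) : Set (EuclideanSpace ℝ (Fin m)) :=
  {x | ∀ i : Fin m, (i : ℕ) < k → 0 ≤ x i}

/-- The set `S^{m,m'}_{k,k'} ∖ ({0} × S^{m'}_{k'})`, i.e. points `(η,μ)` of the sphere
in `ℝ^m × ℝ^{m'+1}` belonging to `ℝ^m_k × ℝ^{m'+1}_{k'}` with `η ≠ 0`. -/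
def sourceSet (m m' k k' : ℕ) :
    Set (EuclideanSpace ℝ (Fin m) × EuclideanSpace ℝ (Fin (m' + 1))) :=
  {q | ‖q.1‖ ^ 2 + ‖q.2‖ ^ 2 = 1 ∧ q.1 ∈ orthant m k ∧ q.2 ∈ orthant (m' + 1) k' ∧ q.1 ≠ 0}

/-- The set `S^{m−1}_k × {(r,μ) ∈ S^{m'+1}_{k'+1} : r > 0}`. -/
def targetSet (m m' k k' : ℕ) :
    Set (EuclideanSpace ℝ (Fin m) × (ℝ × EuclideanSpace ℝ (Fin (m' + 1)))) :=
  {w | (‖w.1‖ = 1 ∧ w.1 ∈ orthant m k) ∧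
    (w.2.1 ^ 2 + ‖w.2.2‖ ^ 2 = 1 ∧ 0 < w.2.1 ∧ w.2.2 ∈ orthant (m' + 1) k')}

/-- The splitting map `Ψ(η,μ) = (η/‖η‖, (‖η‖, μ))`. -/
def psiSplit (m m' : ℕ)
    (q : EuclideanSpace ℝ (Fin m) × EuclideanSpace ℝ (Fin (m' + 1))) :
    EuclideanSpace ℝ (Fin m) × (ℝ × EuclideanSpace ℝ (Fin (m' + 1))) :=
  (‖q.1‖⁻¹ • q.1, (‖q.1‖, q.2))

/-- The inverse map `(a, (r, μ)) ↦ (r·a, μ)`. -/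
def psiInv (m m' : ℕ)
    (w : EuclideanSpace ℝ (Fin m) × (ℝ × EuclideanSpace ℝ (Fin (m' + 1)))) :
    EuclideanSpace ℝ (Fin m) × EuclideanSpace ℝ (Fin (m' + 1)) :=
  (w.2.1 • w.1, w.2.2)

lemma orthant_smul {m k : ℕ} {c : ℝ} (hc : 0 ≤ c) {x : EuclideanSpace ℝ (Fin m)}
    (hx : x ∈ orthant m k) : c • x ∈ orthant m k := by
  intro i hi
  have : (c • x) i = c * x i := rfl
  rw [this]
  exact mul_nonneg hc (hx i hi)

/-- `Ψ(η,μ) = (η/‖η‖, (‖η‖,μ))` is a bijection from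
`{(η,μ) ∈ S^{m,m'}_{k,k'} : η ≠ 0}` onto `S^{m−1}_k × {(r,μ) ∈ S^{m'+1}_{k'+1} : r > 0}`
with inverse `(a,(r,μ)) ↦ (r·a, μ)`; both are restrictions of smooth maps defined on
open subsets of the ambient euclidean spaces. -/
theorem statement9 (m m' k k' : ℕ) (hm : 1 ≤ m) (hk : k ≤ m) (hk' : k' ≤ m' + 1) :
    Set.BijOn (psiSplit m m') (sourceSet m m' k k') (targetSet m m' k k') ∧
    Set.InvOn (psiInv m m') (psiSplit m m')
      (sourceSet m m' k k') (targetSet m m' k k') ∧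
    ContDiffOn ℝ (⊤ : ℕ∞) (psiSplit m m')
      {q : EuclideanSpace ℝ (Fin m) × EuclideanSpace ℝ (Fin (m' + 1)) | q.1 ≠ 0} ∧
    IsOpen {q : EuclideanSpace ℝ (Fin m) × EuclideanSpace ℝ (Fin (m' + 1)) | q.1 ≠ 0} ∧
    sourceSet m m' k k' ⊆
      {q : EuclideanSpace ℝ (Fin m) × EuclideanSpace ℝ (Fin (m' + 1)) | q.1 ≠ 0} ∧
    ContDiff ℝ (⊤ : ℕ∞) (psiInv m m') := by
  have hMapsTo : Set.MapsTo (psiSplit m m') (sourceSet m m' k k') (targetSet m m' k k') := by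
    rintro ⟨η, μ⟩ ⟨hsph, hη, hμ, hne⟩
    have hpos : 0 < ‖η‖ := norm_pos_iff.mpr hne
    refine ⟨⟨?_, orthant_smul (inv_nonneg.mpr hpos.le) hη⟩, ?_, hpos, hμ⟩
    · simp [psiSplit, norm_smul, abs_of_pos (inv_pos.mpr hpos), inv_mul_cancel₀ hpos.ne']
    · simpa [psiSplit] using hsph
  have hMapsTo' : Set.MapsTo (psiInv m m') (targetSet m m' k k') (sourceSet m m' k k') := by
    rintro ⟨a, r, μ⟩ ⟨⟨ha1, ha⟩, hsph, hr, hμ⟩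
    have ha0 : a ≠ 0 := by intro h; rw [h, norm_zero] at ha1; norm_num at ha1
    refine ⟨?_, orthant_smul hr.le ha, hμ, smul_ne_zero hr.ne' ha0⟩
    simpa [psiInv, norm_smul, abs_of_pos hr, ha1] using hsph
  have hleft : Set.LeftInvOn (psiInv m m') (psiSplit m m') (sourceSet m m' k k') := by
    rintro ⟨η, μ⟩ ⟨_, _, _, hne⟩
    have hpos : 0 < ‖η‖ := norm_pos_iff.mpr hne
    simp [psiSplit, psiInv, smul_smul, mul_inv_cancel₀ hpos.ne']
  have hright : Set.RightInvOn (psiInv m m') (psiSplit m m') (targetSet m m' k k') := by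
    rintro ⟨a, r, μ⟩ ⟨⟨ha1, _⟩, _, hr, _⟩
    have hn : ‖r • a‖ = r := by
      rw [norm_smul, ha1, mul_one, Real.norm_eq_abs, abs_of_pos hr]
    simp [psiSplit, psiInv, hn, smul_smul, inv_mul_cancel₀ hr.ne']
  have hInv : Set.InvOn (psiInv m m') (psiSplit m m')
      (sourceSet m m' k k') (targetSet m m' k k') := ⟨hleft, hright⟩
  have hsub : sourceSet m m' k k' ⊆
      {q : EuclideanSpace ℝ (Fin m) × EuclideanSpace ℝ (Fin (m' + 1)) | q.1 ≠ 0} :=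
    fun q hq => hq.2.2.2
  have hnorm : ContDiffOn ℝ (⊤ : ℕ∞) (fun q : EuclideanSpace ℝ (Fin m) ×
      EuclideanSpace ℝ (Fin (m' + 1)) => ‖q.1‖)
      {q : EuclideanSpace ℝ (Fin m) × EuclideanSpace ℝ (Fin (m' + 1)) | q.1 ≠ 0} :=
    ContDiffOn.norm ℝ contDiff_fst.contDiffOn (fun x hx => hx)
  have hnz : ∀ x ∈ {q : EuclideanSpace ℝ (Fin m) × EuclideanSpace ℝ (Fin (m' + 1)) | q.1 ≠ 0},
      ‖x.1‖ ≠ 0 := fun x hx => norm_ne_zero_iff.mpr hx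
  refine ⟨hInv.bijOn hMapsTo hMapsTo', hInv, ?_, ?_, hsub, ?_⟩
  · exact ((hnorm.inv hnz).smul contDiff_fst.contDiffOn).prodMk
      (hnorm.prodMk contDiff_snd.contDiffOn)
  · exact isOpen_compl_singleton.preimage continuous_fst
  · exact ((contDiff_fst.comp contDiff_snd).smul contDiff_fst).prodMk
      (contDiff_snd.comp contDiff_snd)
end
end
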